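/- Let r_max ≥ 0 and suppose π̂, r : V → ℝ satisfy, for every t ∈ V, the invariant π_s(t) = π̂(t) + Σ_{u∈V} r(u)·π_u(t), with 0 ≤ r(u) ≤ r_max·d(u) for every u ∈ V. Then for every node t ∈ V, 0 ≤ π_s(t) − π̂(t) ≤ r_max·d(t); that is, the normalized additive error satisfies |π_s(t)/d(t) − π̂(t)/d(t)| ≤ r_max at every node. -/

import Mathlib

open Finset

/-- Weighted degree of a node. -/
noncomputable def deg {V : Type*} [Fintype V] (A : V → V → ℝ) (u : V) : ℝ := ∑ v, A u v

/-- Transition matrix `P t v = A t v / d v` (column-stochastic). -/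
noncomputable def transP {V : Type*} [Fintype V] (A : V → V → ℝ) : Matrix V V ℝ :=
  Matrix.of fun t v => A t v / deg A v

/-- Single-source personalized PageRank: `π_x = Σ_{ℓ≥0} α(1-α)^ℓ P^ℓ e_x`. -/
noncomputable def ppr {V : Type*} [Fintype V] [DecidableEq V]
    (A : V → V → ℝ) (α : ℝ) (x t : V) : ℝ :=
  ∑' ℓ : ℕ, α * (1 - α) ^ ℓ * ((transP A ^ ℓ).mulVec (Pi.single x 1)) t

section Aux

variable {V : Type*} [Fintype V] [DecidableEq V]
variable (A : V → V → ℝ)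

lemma transP_nonneg (hnonneg : ∀ u v : V, 0 ≤ A u v) (hdeg : ∀ u : V, 0 < deg A u)
    (t v : V) : 0 ≤ transP A t v :=
  div_nonneg (hnonneg t v) (hdeg v).le

lemma transP_pow_nonneg (hnonneg : ∀ u v : V, 0 ≤ A u v) (hdeg : ∀ u : V, 0 < deg A u)
    (ℓ : ℕ) (t v : V) : 0 ≤ (transP A ^ ℓ) t v := by
  induction ℓ generalizing t v with
  | zero => simp [Matrix.one_apply]; positivity
  | succ n ih =>
    rw [pow_succ, Matrix.mul_apply]
    exact Finset.sum_nonneg fun w _ => mul_nonneg (ih t w) (transP_nonneg A hnonneg hdeg w v)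

lemma transP_colsum (hsymm : ∀ u v : V, A u v = A v u) (hdeg : ∀ u : V, 0 < deg A u)
    (v : V) : ∑ t, transP A t v = 1 := by
  have : ∑ t, transP A t v = (∑ t, A t v) / deg A v := by
    simp [transP, Finset.sum_div]
  rw [this]
  have h2 : ∑ t, A t v = deg A v := by
    unfold deg; exact Finset.sum_congr rfl fun t _ => hsymm t v
  rw [h2, div_self (hdeg v).ne']

lemma transP_pow_colsum (hsymm : ∀ u v : V, A u v = A v u) (hdeg : ∀ u : V, 0 < deg A u)
    (ℓ : ℕ) (v : V) : ∑ t, (transP A ^ ℓ) t v = 1 := by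
  induction ℓ generalizing v with
  | zero => simp [Matrix.one_apply]
  | succ n ih =>
    have : ∑ t, (transP A ^ (n + 1)) t v
        = ∑ w, (∑ t, (transP A ^ n) t w) * transP A w v := by
      simp only [pow_succ, Matrix.mul_apply, Finset.sum_mul]
      rw [Finset.sum_comm]
    rw [this]
    simp only [fun w => ih w, one_mul]
    exact transP_colsum A hsymm hdeg v

lemma transP_pow_le_one (hsymm : ∀ u v : V, A u v = A v u) (hnonneg : ∀ u v : V, 0 ≤ A u v)
    (hdeg : ∀ u : V, 0 < deg A u) (ℓ : ℕ) (t v : V) : (transP A ^ ℓ) t v ≤ 1 := by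
  calc (transP A ^ ℓ) t v ≤ ∑ t', (transP A ^ ℓ) t' v :=
        Finset.single_le_sum (fun t' _ => transP_pow_nonneg A hnonneg hdeg ℓ t' v)
          (Finset.mem_univ t)
    _ = 1 := transP_pow_colsum A hsymm hdeg ℓ v

lemma ppr_eq (α : ℝ) (x t : V) :
    ppr A α x t = ∑' ℓ : ℕ, α * (1 - α) ^ ℓ * (transP A ^ ℓ) t x := by
  unfold ppr
  congr 1
  funext ℓ
  congr 1
  simp [Matrix.mulVec, dotProduct, Pi.single_apply, mul_ite]

lemma ppr_summable (hsymm : ∀ u v : V, A u v = A v u) (hnonneg : ∀ u v : V, 0 ≤ A u v)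
    (hdeg : ∀ u : V, 0 < deg A u) {α : ℝ} (hα : α ∈ Set.Ioo (0 : ℝ) 1) (x t : V) :
    Summable (fun ℓ : ℕ => α * (1 - α) ^ ℓ * (transP A ^ ℓ) t x) := by
  obtain ⟨hα0, hα1⟩ := hα
  have hgeo : Summable (fun ℓ : ℕ => α * (1 - α) ^ ℓ) :=
    (summable_geometric_of_lt_one (by linarith) (by linarith)).mul_left α
  refine Summable.of_nonneg_of_le (fun ℓ => ?_) (fun ℓ => ?_) hgeo
  · exact mul_nonneg (mul_nonneg hα0.le (pow_nonneg (by linarith) ℓ))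
      (transP_pow_nonneg A hnonneg hdeg ℓ t x)
  · calc α * (1 - α) ^ ℓ * (transP A ^ ℓ) t x
        ≤ α * (1 - α) ^ ℓ * 1 := by
          apply mul_le_mul_of_nonneg_left (transP_pow_le_one A hsymm hnonneg hdeg ℓ t x)
          exact mul_nonneg hα0.le (pow_nonneg (by linarith) ℓ)
      _ = α * (1 - α) ^ ℓ := mul_one _

lemma ppr_nonneg (hsymm : ∀ u v : V, A u v = A v u) (hnonneg : ∀ u v : V, 0 ≤ A u v)
    (hdeg : ∀ u : V, 0 < deg A u) {α : ℝ} (hα : α ∈ Set.Ioo (0 : ℝ) 1) (x t : V) :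
    0 ≤ ppr A α x t := by
  rw [ppr_eq]
  exact tsum_nonneg fun ℓ =>
    mul_nonneg (mul_nonneg hα.1.le (pow_nonneg (by have := hα.2; linarith) ℓ))
      (transP_pow_nonneg A hnonneg hdeg ℓ t x)

lemma transP_pow_rowdeg (hnonneg : ∀ u v : V, 0 ≤ A u v) (hdeg : ∀ u : V, 0 < deg A u)
    (ℓ : ℕ) (t : V) : ∑ u, (transP A ^ ℓ) t u * deg A u = deg A t := by
  induction ℓ generalizing t with
  | zero => simp [Matrix.one_apply, Finset.sum_ite_eq]
  | succ n ih =>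
    have : ∑ u, (transP A ^ (n + 1)) t u * deg A u
        = ∑ w, (transP A ^ n) t w * (∑ u, transP A w u * deg A u) := by
      simp only [pow_succ, Matrix.mul_apply, Finset.sum_mul, Finset.mul_sum]
      rw [Finset.sum_comm]
      exact Finset.sum_congr rfl fun w _ => Finset.sum_congr rfl fun u _ => by ring
    rw [this]
    have hP : ∀ w : V, ∑ u, transP A w u * deg A u = deg A w := by
      intro w
      have : ∀ u : V, transP A w u * deg A u = A w u := fun u =>
        div_mul_cancel₀ _ (hdeg u).ne'
      simp only [this]
      rfl
    simp only [hP]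
    exact ih t

lemma sum_deg_ppr (hsymm : ∀ u v : V, A u v = A v u) (hnonneg : ∀ u v : V, 0 ≤ A u v)
    (hdeg : ∀ u : V, 0 < deg A u) {α : ℝ} (hα : α ∈ Set.Ioo (0 : ℝ) 1) (t : V) :
    ∑ u, deg A u * ppr A α u t = deg A t := by
  obtain ⟨hα0, hα1⟩ := hα
  have hsum : ∀ u : V, Summable (fun ℓ : ℕ => deg A u * (α * (1 - α) ^ ℓ * (transP A ^ ℓ) t u)) :=
    fun u => (ppr_summable A hsymm hnonneg hdeg ⟨hα0, hα1⟩ u t).mul_left _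
  calc ∑ u, deg A u * ppr A α u t
      = ∑ u, ∑' ℓ : ℕ, deg A u * (α * (1 - α) ^ ℓ * (transP A ^ ℓ) t u) := by
        refine Finset.sum_congr rfl fun u _ => ?_
        rw [ppr_eq, ← tsum_mul_left]
    _ = ∑' ℓ : ℕ, ∑ u, deg A u * (α * (1 - α) ^ ℓ * (transP A ^ ℓ) t u) :=
        (Summable.tsum_finsetSum fun u _ => hsum u).symm
    _ = ∑' ℓ : ℕ, α * (1 - α) ^ ℓ * (∑ u, (transP A ^ ℓ) t u * deg A u) := by
        refine tsum_congr fun ℓ => ?_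
        rw [Finset.mul_sum]
        exact Finset.sum_congr rfl fun u _ => by ring
    _ = ∑' ℓ : ℕ, α * (1 - α) ^ ℓ * deg A t := by
        refine tsum_congr fun ℓ => ?_
        rw [transP_pow_rowdeg A hnonneg hdeg]
    _ = deg A t := by
        rw [tsum_mul_right, tsum_mul_left,
          tsum_geometric_of_lt_one (by linarith) (by linarith)]
        rw [sub_sub_cancel]
        field_simp

end Aux

/-- **Normalized additive error of LocalPush (Fact 2.3)**: if the LocalPush invariant
holds and every residue satisfies `0 ≤ r(u) ≤ r_max·d(u)`, then for every node `t`,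
`0 ≤ π_s(t) − π̂(t) ≤ r_max·d(t)`; that is, the normalized additive error is at most
`r_max` at every node. -/
theorem localpush_normalized_additive_error
    {V : Type*} [Fintype V] [DecidableEq V] [Nonempty V]
    (A : V → V → ℝ)
    (hsymm : ∀ u v : V, A u v = A v u)
    (hnonneg : ∀ u v : V, 0 ≤ A u v)
    (hdeg : ∀ u : V, 0 < deg A u)
    (α : ℝ) (hα : α ∈ Set.Ioo (0 : ℝ) 1)
    (s : V)
    (rmax : ℝ) (hrmax : 0 ≤ rmax)
    (piHat r : V → ℝ)
    (hinv : ∀ t : V, ppr A α s t = piHat t + ∑ u, r u * ppr A α u t)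
    (hr : ∀ u : V, 0 ≤ r u ∧ r u ≤ rmax * deg A u) :
    ∀ t : V,
      (0 ≤ ppr A α s t - piHat t) ∧
      (ppr A α s t - piHat t ≤ rmax * deg A t) ∧
      (|ppr A α s t / deg A t - piHat t / deg A t| ≤ rmax) := by
  intro t
  have hdiff : ppr A α s t - piHat t = ∑ u, r u * ppr A α u t := by
    have := hinv t; linarith
  have hppr : ∀ u : V, 0 ≤ ppr A α u t := fun u => ppr_nonneg A hsymm hnonneg hdeg hα u t
  have h0 : 0 ≤ ∑ u, r u * ppr A α u t :=
    Finset.sum_nonneg fun u _ => mul_nonneg (hr u).1 (hppr u)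
  have h1 : ∑ u, r u * ppr A α u t ≤ rmax * deg A t := by
    calc ∑ u, r u * ppr A α u t
        ≤ ∑ u, rmax * (deg A u * ppr A α u t) := by
          refine Finset.sum_le_sum fun u _ => ?_
          rw [← mul_assoc]
          exact mul_le_mul_of_nonneg_right (hr u).2 (hppr u)
      _ = rmax * ∑ u, deg A u * ppr A α u t := by rw [Finset.mul_sum]
      _ = rmax * deg A t := by rw [sum_deg_ppr A hsymm hnonneg hdeg hα t]
  refine ⟨by rw [hdiff]; exact h0, by rw [hdiff]; exact h1, ?_⟩
  have hd := hdeg t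
  rw [div_sub_div_same, abs_of_nonneg (by rw [hdiff]; positivity),
    div_le_iff₀ hd, hdiff]
  linarith [h1]
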